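/- Let n ≥ 5 and fix a pair of indices i ≠ j in {1,…,n}. Suppose the parameter collection c satisfies: (C1) c_i^{kj} c_j^{li} ≠ c_j^{ki} c_i^{lj} for all k ≠ l with k,l ∉ {i,j}; and (C2) for every p ∉ {i,j} there exist k < l < m with k,l,m ∉ {i,j} such that for each I ∈ {i,j}, c_p^{kI}(c_i^{lj}c_j^{mi} − c_j^{li}c_i^{mj}) + c_p^{lI}(c_j^{ki}c_i^{mj} − c_i^{kj}c_j^{mi}) + c_p^{mI}(c_i^{kj}c_j^{li} − c_j^{ki}c_i^{lj}) ≠ 0. Then there exists T > 0 such that for every t ∈ (0,T) the singular part Σ_sing(tc) is nonempty, i.e., there exists ξ ∈ ℝ^n \ {0} with rank P(ξ,tc) ≤ n−2; in particular the characteristic variety Σ(tc) is not smooth in ℝ^n \ {0}. -/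

import Mathlib

open Matrix

/-- A parameter collection: `c i k j` denotes `c_i^{kj}`, symmetric in the two
superscripts, with normalizations `c_i^{ii} = 1` and `c_i^{jj} = 0` for `i ≠ j`. -/
def IsParamColl (n : ℕ) (c : Fin n → Fin n → Fin n → ℝ) : Prop :=
  (∀ i j k : Fin n, j ≠ k → c i k j = c i j k) ∧
  (∀ i : Fin n, c i i i = 1) ∧
  (∀ i j : Fin n, i ≠ j → c i j j = 0)

/-- The principal symbol `P(ξ, c) = Σ_k ξ_k A^k`, where `(A^k)_{ij} = c_i^{kj}`. -/
def pSymb {n : ℕ} (ξ : Fin n → ℝ) (c : Fin n → Fin n → Fin n → ℝ) :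
    Matrix (Fin n) (Fin n) ℝ :=
  Matrix.of fun i j => ∑ k, ξ k * c i k j

/-- The scaled parameter collection `t • c` (normalized entries unchanged). -/
def pScale {n : ℕ} (t : ℝ) (c : Fin n → Fin n → Fin n → ℝ) :
    Fin n → Fin n → Fin n → ℝ :=
  fun i k j => if k = j then c i k j else t * c i k j

abbrev Yy (n : ℕ) := ℝ × ((Fin n → ℝ) × (Fin n → ℝ))

def xiF {n : ℕ} (η : Fin n → ℝ) (i j q r : Fin n) (y : Yy n) : Fin n → ℝ :=
  fun k => if k = i then y.1 * y.2.1 j else if k = j then y.1 * y.2.2 i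
    else η k + (if k = q then y.2.1 i else 0) + (if k = r then y.2.2 j else 0)

def vF {n : ℕ} (i j : Fin n) (y : Yy n) : Fin n → ℝ :=
  fun k => if k = i then 1 else if k = j then 0 else y.1 * y.2.1 k

def wF {n : ℕ} (i j : Fin n) (y : Yy n) : Fin n → ℝ :=
  fun k => if k = j then 1 else if k = i then 0 else y.1 * y.2.2 k

def SS {n : ℕ} (c : Fin n → Fin n → Fin n → ℝ) (ξ v : Fin n → ℝ) : Fin n → ℝ :=
  fun m => ∑ b, ∑ k, v b * (ξ k * c m k b)

def PhiV {n : ℕ} (c : Fin n → Fin n → Fin n → ℝ) (η : Fin n → ℝ) (i j q r : Fin n)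
    (y : Yy n) : Fin n → ℝ :=
  fun m => if m = i then (1 - y.1) * y.2.1 j + SS c (xiF η i j q r y) (vF i j y) m
    else if m = j then SS c (xiF η i j q r y) (vF i j y) m
    else (1 - y.1) * (xiF η i j q r y m * y.2.1 m) + SS c (xiF η i j q r y) (vF i j y) m

def PhiW {n : ℕ} (c : Fin n → Fin n → Fin n → ℝ) (η : Fin n → ℝ) (i j q r : Fin n)
    (y : Yy n) : Fin n → ℝ :=
  fun m => if m = j then (1 - y.1) * y.2.2 i + SS c (xiF η i j q r y) (wF i j y) m
    else if m = i then SS c (xiF η i j q r y) (wF i j y) m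
    else (1 - y.1) * (xiF η i j q r y m * y.2.2 m) + SS c (xiF η i j q r y) (wF i j y) m

def Psi {n : ℕ} (c : Fin n → Fin n → Fin n → ℝ) (η : Fin n → ℝ) (i j q r : Fin n)
    (y : Yy n) : Yy n :=
  (y.1, PhiV c η i j q r y, PhiW c η i j q r y)

-- The key row identity: P(ξ(y), pScale y.1 c) ∘ v(y) = y.1 • Φv(y), similarly for w.
lemma row_identity {n : ℕ} {c : Fin n → Fin n → Fin n → ℝ} (hc : IsParamColl n c)
    (ξ u : Fin n → ℝ) (t : ℝ) (m : Fin n) :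
    (pSymb ξ (pScale t c)).mulVec u m
      = t * SS c ξ u m + (1 - t) * (ξ m * u m) := by
  have hsplit : ∀ b k : Fin n, ξ k * (pScale t c) m k b
      = t * (ξ k * c m k b) + (if k = b then (1 - t) * (ξ k * c m k b) else 0) := by
    intro b k
    by_cases h : k = b <;> simp [pScale, h] <;> ring
  calc (pSymb ξ (pScale t c)).mulVec u m
      = ∑ b, (∑ k, ξ k * (pScale t c) m k b) * u b := by
        simp [Matrix.mulVec, pSymb, dotProduct, Matrix.of_apply]
    _ = ∑ b, ((t * ∑ k, ξ k * c m k b) + (1 - t) * (ξ b * c m b b)) * u b := by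
        apply Finset.sum_congr rfl; intro b _
        congr 1
        rw [Finset.sum_congr rfl (fun k _ => hsplit b k), Finset.sum_add_distrib,
          Finset.sum_ite_eq']
        simp [Finset.mul_sum]
    _ = t * SS c ξ u m + (1 - t) * ∑ b, ξ b * c m b b * u b := by
        simp only [SS, Finset.mul_sum, Finset.sum_add_distrib, add_mul]
        congr 1
        · apply Finset.sum_congr rfl; intro b _
          rw [Finset.sum_mul]
          apply Finset.sum_congr rfl; intro k _; ring
        · apply Finset.sum_congr rfl; intro b _; ring
    _ = t * SS c ξ u m + (1 - t) * (ξ m * u m) := by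
        congr 1
        have : ∀ b : Fin n, ξ b * c m b b * u b = if b = m then ξ m * u m else 0 := by
          intro b
          by_cases h : b = m
          · subst h; rw [hc.2.1]; simp
          · rw [hc.2.2 m b (Ne.symm h)]; simp [h]
        rw [Finset.sum_congr rfl (fun b _ => this b), Finset.sum_ite_eq']
        simp

lemma mulVec_v {n : ℕ} {c : Fin n → Fin n → Fin n → ℝ} (hc : IsParamColl n c)
    {i j : Fin n} (hij : i ≠ j) (η : Fin n → ℝ) (q r : Fin n) (y : Yy n) :
    (pSymb (xiF η i j q r y) (pScale y.1 c)).mulVec (vF i j y)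
      = y.1 • PhiV c η i j q r y := by
  funext m
  rw [row_identity hc]
  simp only [Pi.smul_apply, smul_eq_mul, PhiV]
  by_cases hmi : m = i
  · have h1 : vF i j y m = 1 := by simp [vF, hmi]
    have h2 : xiF η i j q r y m = y.1 * y.2.1 j := by simp [xiF, hmi]
    rw [if_pos hmi, h1, h2]; ring
  · by_cases hmj : m = j
    · have h1 : vF i j y m = 0 := by simp [vF, hmi, hmj, Ne.symm hij]
      rw [if_neg hmi, if_pos hmj, h1]; ring
    · have h1 : vF i j y m = y.1 * y.2.1 m := by simp [vF, hmi, hmj]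
      rw [if_neg hmi, if_neg hmj, h1]; ring

lemma mulVec_w {n : ℕ} {c : Fin n → Fin n → Fin n → ℝ} (hc : IsParamColl n c)
    {i j : Fin n} (hij : i ≠ j) (η : Fin n → ℝ) (q r : Fin n) (y : Yy n) :
    (pSymb (xiF η i j q r y) (pScale y.1 c)).mulVec (wF i j y)
      = y.1 • PhiW c η i j q r y := by
  funext m
  rw [row_identity hc]
  simp only [Pi.smul_apply, smul_eq_mul, PhiW]
  by_cases hmj : m = j
  · have h1 : wF i j y m = 1 := by simp [wF, hmj]
    have h2 : xiF η i j q r y m = y.1 * y.2.2 i := by simp [xiF, hmj, Ne.symm hij]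
    rw [if_pos hmj, h1, h2]; ring
  · by_cases hmi : m = i
    · have h1 : wF i j y m = 0 := by simp [wF, hmi, hmj, hij]
      rw [if_neg hmj, if_pos hmi, h1]; ring
    · have h1 : wF i j y m = y.1 * y.2.2 m := by simp [wF, hmi, hmj]
      rw [if_neg hmj, if_neg hmi, h1]; ring

lemma contDiff_Psi {n : ℕ} (c : Fin n → Fin n → Fin n → ℝ) (η : Fin n → ℝ)
    (i j q r : Fin n) : ContDiff ℝ 1 (Psi c η i j q r) := by
  have hT : ContDiff ℝ 1 (fun y : Yy n => y.1) := contDiff_fst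
  have hA : ∀ k, ContDiff ℝ 1 (fun y : Yy n => y.2.1 k) :=
    fun k => (contDiff_pi.1 (contDiff_fst.comp contDiff_snd)) k
  have hB : ∀ k, ContDiff ℝ 1 (fun y : Yy n => y.2.2 k) :=
    fun k => (contDiff_pi.1 (contDiff_snd.comp contDiff_snd)) k
  have hxi : ∀ k, ContDiff ℝ 1 (fun y : Yy n => xiF η i j q r y k) := by
    intro k
    by_cases hki : k = i
    · simp only [xiF, if_pos hki]; exact hT.mul (hA j)
    · by_cases hkj : k = j
      · simp only [xiF, if_neg hki, if_pos hkj]; exact hT.mul (hB i)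
      · simp only [xiF, if_neg hki, if_neg hkj]
        refine (contDiff_const.add ?_).add ?_
        · by_cases hkq : k = q
          · simp only [if_pos hkq]; exact hA i
          · simp only [if_neg hkq]; exact contDiff_const
        · by_cases hkr : k = r
          · simp only [if_pos hkr]; exact hB j
          · simp only [if_neg hkr]; exact contDiff_const
  have hv : ∀ k, ContDiff ℝ 1 (fun y : Yy n => vF i j y k) := by
    intro k
    by_cases hki : k = i
    · simp only [vF, if_pos hki]; exact contDiff_const
    · by_cases hkj : k = j
      · simp only [vF, if_neg hki, if_pos hkj]; exact contDiff_const
      · simp only [vF, if_neg hki, if_neg hkj]; exact hT.mul (hA k)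
  have hw : ∀ k, ContDiff ℝ 1 (fun y : Yy n => wF i j y k) := by
    intro k
    by_cases hkj : k = j
    · simp only [wF, if_pos hkj]; exact contDiff_const
    · by_cases hki : k = i
      · simp only [wF, if_neg hkj, if_pos hki]; exact contDiff_const
      · simp only [wF, if_neg hkj, if_neg hki]; exact hT.mul (hB k)
  have hSv : ∀ m, ContDiff ℝ 1 (fun y : Yy n => SS c (xiF η i j q r y) (vF i j y) m) := by
    intro m
    apply ContDiff.sum; intro b _
    apply ContDiff.sum; intro k _
    exact (hv b).mul ((hxi k).mul contDiff_const)
  have hSw : ∀ m, ContDiff ℝ 1 (fun y : Yy n => SS c (xiF η i j q r y) (wF i j y) m) := by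
    intro m
    apply ContDiff.sum; intro b _
    apply ContDiff.sum; intro k _
    exact (hw b).mul ((hxi k).mul contDiff_const)
  have hPV : ContDiff ℝ 1 (fun y : Yy n => PhiV c η i j q r y) := by
    apply contDiff_pi.2; intro m
    by_cases hmi : m = i
    · simp only [PhiV, if_pos hmi]
      exact ((contDiff_const.sub hT).mul (hA j)).add (hSv m)
    · by_cases hmj : m = j
      · simp only [PhiV, if_neg hmi, if_pos hmj]; exact hSv m
      · simp only [PhiV, if_neg hmi, if_neg hmj]
        exact ((contDiff_const.sub hT).mul ((hxi m).mul (hA m))).add (hSv m)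
  have hPW : ContDiff ℝ 1 (fun y : Yy n => PhiW c η i j q r y) := by
    apply contDiff_pi.2; intro m
    by_cases hmj : m = j
    · simp only [PhiW, if_pos hmj]
      exact ((contDiff_const.sub hT).mul (hB i)).add (hSw m)
    · by_cases hmi : m = i
      · simp only [PhiW, if_neg hmj, if_pos hmi]; exact hSw m
      · simp only [PhiW, if_neg hmj, if_neg hmi]
        exact ((contDiff_const.sub hT).mul ((hxi m).mul (hB m))).add (hSw m)
  exact hT.prodMk (hPV.prodMk hPW)

lemma hasDerivAt_PhiV {n : ℕ} (c : Fin n → Fin n → Fin n → ℝ) (η a0 b0 δa δb : Fin n → ℝ)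
    (i j q r : Fin n) (hij : j ≠ i) (hqi : q ≠ i) (hri : r ≠ i) (hqj : q ≠ j) (hrj : r ≠ j)
    (ha0i : a0 i = 0) (hb0j : b0 j = 0) (m : Fin n) :
    HasDerivAt (fun s : ℝ => PhiV c η i j q r (((0:ℝ), a0, b0) + s • ((0:ℝ), δa, δb)) m)
      (if m = i then δa j + (δa i * c m q i + δb j * c m r i)
       else if m = j then δa i * c m q i + δb j * c m r i
       else ((if m = q then δa i else 0) + (if m = r then δb j else 0)) * a0 m + η m * δa m
            + (δa i * c m q i + δb j * c m r i)) 0 := by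
  set e : Fin n → ℝ := fun k => (if k = q then δa i else 0) + (if k = r then δb j else 0) with hE
  set y0 : Yy n := ((0:ℝ), a0, b0) with hY0
  set δ : Yy n := ((0:ℝ), δa, δb) with hD
  have hg1 : ∀ s : ℝ, (y0 + s • δ).1 = 0 := by intro s; show 0 + s * 0 = 0; ring
  have hγ0 : y0 + (0:ℝ) • δ = y0 := by simp
  have hd_t : HasDerivAt (fun s : ℝ => (y0 + s • δ).1) 0 0 := by
    have : (fun s : ℝ => (y0 + s • δ).1) = fun _ => (0:ℝ) := funext hg1
    rw [this]; exact hasDerivAt_const 0 0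
  have hd_a : ∀ k, HasDerivAt (fun s : ℝ => (y0 + s • δ).2.1 k) (δa k) 0 := by
    intro k
    have : (fun s : ℝ => (y0 + s • δ).2.1 k) = fun s => a0 k + s * δa k := rfl
    rw [this]
    simpa using (hasDerivAt_mul_const (δa k)).const_add (a0 k)
  have hd_b : ∀ k, HasDerivAt (fun s : ℝ => (y0 + s • δ).2.2 k) (δb k) 0 := by
    intro k
    have : (fun s : ℝ => (y0 + s • δ).2.2 k) = fun s => b0 k + s * δb k := rfl
    rw [this]
    simpa using (hasDerivAt_mul_const (δb k)).const_add (b0 k)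
  have hd_xi : ∀ k, HasDerivAt (fun s : ℝ => xiF η i j q r (y0 + s • δ) k) (e k) 0 := by
    intro k
    by_cases hki : k = i
    · have h1 : (fun s : ℝ => xiF η i j q r (y0 + s • δ) k) = fun _ => (0:ℝ) := by
        funext s; simp [xiF, hki, hg1 s]
      have h2 : e k = 0 := by simp [hE, hki, Ne.symm hqi, Ne.symm hri]
      rw [h1, h2]; exact hasDerivAt_const 0 0
    · by_cases hkj : k = j
      · have h1 : (fun s : ℝ => xiF η i j q r (y0 + s • δ) k) = fun _ => (0:ℝ) := by
          funext s; simp [xiF, hki, hkj, hg1 s]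
        have h2 : e k = 0 := by simp [hE, hkj, Ne.symm hqj, Ne.symm hrj]
        rw [h1, h2]; exact hasDerivAt_const 0 0
      · have h1 : (fun s : ℝ => xiF η i j q r (y0 + s • δ) k)
            = fun s => η k + (if k = q then (y0 + s • δ).2.1 i else 0)
                + (if k = r then (y0 + s • δ).2.2 j else 0) := by
          funext s; simp [xiF, hki, hkj]
        rw [h1]
        have hq' : HasDerivAt (fun s : ℝ => if k = q then (y0 + s • δ).2.1 i else 0)
            (if k = q then δa i else 0) 0 := by
          by_cases h : k = q
          · simp only [if_pos h]; exact hd_a i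
          · simp only [if_neg h]; exact hasDerivAt_const 0 0
        have hr' : HasDerivAt (fun s : ℝ => if k = r then (y0 + s • δ).2.2 j else 0)
            (if k = r then δb j else 0) 0 := by
          by_cases h : k = r
          · simp only [if_pos h]; exact hd_b j
          · simp only [if_neg h]; exact hasDerivAt_const 0 0
        have := (((hasDerivAt_const (0:ℝ) (η k)).fun_add hq').fun_add hr')
        simpa [hE] using this
  have hd_v : ∀ b, HasDerivAt (fun s : ℝ => vF i j (y0 + s • δ) b) 0 0 := by
    intro b
    by_cases hbi : b = i
    · have h1 : (fun s : ℝ => vF i j (y0 + s • δ) b) = fun _ => (1:ℝ) := by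
        funext s; simp [vF, hbi]
      rw [h1]; exact hasDerivAt_const 0 1
    · by_cases hbj : b = j
      · have h1 : (fun s : ℝ => vF i j (y0 + s • δ) b) = fun _ => (0:ℝ) := by
          funext s; simp [vF, hbi, hbj, hij]
        rw [h1]; exact hasDerivAt_const 0 0
      · have h1 : (fun s : ℝ => vF i j (y0 + s • δ) b) = fun _ => (0:ℝ) := by
          funext s; simp [vF, hbi, hbj, hg1 s]
        rw [h1]; exact hasDerivAt_const 0 0
  have hv0 : ∀ b, vF i j y0 b = (if b = i then 1 else 0) := by
    intro b
    by_cases hbi : b = i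
    · simp [vF, hbi]
    · by_cases hbj : b = j <;> simp [vF, hbi, hbj, hY0]
  have hd_SV : ∀ m' : Fin n, HasDerivAt
      (fun s : ℝ => SS c (xiF η i j q r (y0 + s • δ)) (vF i j (y0 + s • δ)) m')
      (δa i * c m' q i + δb j * c m' r i) 0 := by
    intro m'
    have h1 : HasDerivAt
        (fun s : ℝ => SS c (xiF η i j q r (y0 + s • δ)) (vF i j (y0 + s • δ)) m')
        (∑ b, ∑ k, ((0:ℝ) * (xiF η i j q r (y0 + (0:ℝ) • δ) k * c m' k b)
          + vF i j (y0 + (0:ℝ) • δ) b * (e k * c m' k b))) 0 := by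
      apply HasDerivAt.fun_sum; intro b _
      apply HasDerivAt.fun_sum; intro k _
      exact (hd_v b).fun_mul ((hd_xi k).mul_const (c m' k b))
    have h2 : (∑ b, ∑ k, ((0:ℝ) * (xiF η i j q r (y0 + (0:ℝ) • δ) k * c m' k b)
          + vF i j (y0 + (0:ℝ) • δ) b * (e k * c m' k b)))
        = δa i * c m' q i + δb j * c m' r i := by
      rw [hγ0]
      simp only [zero_mul, zero_add]
      rw [Finset.sum_eq_single i]
      · have hv1 : vF i j y0 i = 1 := by simp [vF]
        simp only [hv1, one_mul, hE]
        simp only [add_mul, Finset.sum_add_distrib, ite_mul, zero_mul]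
        rw [Finset.sum_ite_eq', Finset.sum_ite_eq']
        simp
      · intro b _ hbi
        simp [hv0 b, hbi]
      · simp
    rw [h2] at h1; exact h1
  by_cases hmi : m = i
  · rw [if_pos hmi]
    have h1 : (fun s : ℝ => PhiV c η i j q r (y0 + s • δ) m)
        = fun s => (1 - (y0 + s • δ).1) * (y0 + s • δ).2.1 j
            + SS c (xiF η i j q r (y0 + s • δ)) (vF i j (y0 + s • δ)) m := by
      funext s; simp only [PhiV, if_pos hmi]
    rw [h1]
    have h := (((hasDerivAt_const (0:ℝ) (1:ℝ)).fun_sub hd_t).fun_mul (hd_a j)).fun_add (hd_SV m)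
    convert h using 1
    · rfl
    · rfl
    rw [hγ0]
    show _ = (0 - 0) * (a0 j) + (1 - y0.1) * δa j + _
    have : y0.1 = 0 := rfl
    rw [this]; ring
  · by_cases hmj : m = j
    · rw [if_neg hmi, if_pos hmj]
      have h1 : (fun s : ℝ => PhiV c η i j q r (y0 + s • δ) m)
          = fun s => SS c (xiF η i j q r (y0 + s • δ)) (vF i j (y0 + s • δ)) m := by
        funext s; simp only [PhiV, if_neg hmi, if_pos hmj]
      rw [h1]; exact hd_SV m
    · rw [if_neg hmi, if_neg hmj]
      have h1 : (fun s : ℝ => PhiV c η i j q r (y0 + s • δ) m)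
          = fun s => (1 - (y0 + s • δ).1)
              * (xiF η i j q r (y0 + s • δ) m * (y0 + s • δ).2.1 m)
              + SS c (xiF η i j q r (y0 + s • δ)) (vF i j (y0 + s • δ)) m := by
        funext s; simp only [PhiV, if_neg hmi, if_neg hmj]
      rw [h1]
      have h := (((hasDerivAt_const (0:ℝ) (1:ℝ)).fun_sub hd_t).fun_mul
        ((hd_xi m).fun_mul (hd_a m))).fun_add (hd_SV m)
      convert h using 1
      · rfl
      · rfl
      rw [hγ0]
      have hxi0 : xiF η i j q r y0 m = η m := by
        simp [xiF, hmi, hmj, hY0, ha0i, hb0j]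
      show _ = (0 - 0) * (xiF η i j q r y0 m * a0 m)
          + (1 - y0.1) * (e m * a0 m + xiF η i j q r y0 m * δa m) + _
      have hy01 : y0.1 = 0 := rfl
      rw [hxi0, hy01, hE]; ring

lemma hasDerivAt_PhiW {n : ℕ} (c : Fin n → Fin n → Fin n → ℝ) (η a0 b0 δa δb : Fin n → ℝ)
    (i j q r : Fin n) (hij : j ≠ i) (hqi : q ≠ i) (hri : r ≠ i) (hqj : q ≠ j) (hrj : r ≠ j)
    (ha0i : a0 i = 0) (hb0j : b0 j = 0) (m : Fin n) :
    HasDerivAt (fun s : ℝ => PhiW c η i j q r (((0:ℝ), a0, b0) + s • ((0:ℝ), δa, δb)) m)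
      (if m = j then δb i + (δa i * c m q j + δb j * c m r j)
       else if m = i then δa i * c m q j + δb j * c m r j
       else ((if m = q then δa i else 0) + (if m = r then δb j else 0)) * b0 m + η m * δb m
            + (δa i * c m q j + δb j * c m r j)) 0 := by
  set e : Fin n → ℝ := fun k => (if k = q then δa i else 0) + (if k = r then δb j else 0) with hE
  set y0 : Yy n := ((0:ℝ), a0, b0) with hY0
  set δ : Yy n := ((0:ℝ), δa, δb) with hD
  have hg1 : ∀ s : ℝ, (y0 + s • δ).1 = 0 := by intro s; show 0 + s * 0 = 0; ring
  have hγ0 : y0 + (0:ℝ) • δ = y0 := by simp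
  have hd_t : HasDerivAt (fun s : ℝ => (y0 + s • δ).1) 0 0 := by
    have : (fun s : ℝ => (y0 + s • δ).1) = fun _ => (0:ℝ) := funext hg1
    rw [this]; exact hasDerivAt_const 0 0
  have hd_a : ∀ k, HasDerivAt (fun s : ℝ => (y0 + s • δ).2.1 k) (δa k) 0 := by
    intro k
    have : (fun s : ℝ => (y0 + s • δ).2.1 k) = fun s => a0 k + s * δa k := rfl
    rw [this]
    simpa using (hasDerivAt_mul_const (δa k)).const_add (a0 k)
  have hd_b : ∀ k, HasDerivAt (fun s : ℝ => (y0 + s • δ).2.2 k) (δb k) 0 := by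
    intro k
    have : (fun s : ℝ => (y0 + s • δ).2.2 k) = fun s => b0 k + s * δb k := rfl
    rw [this]
    simpa using (hasDerivAt_mul_const (δb k)).const_add (b0 k)
  have hd_xi : ∀ k, HasDerivAt (fun s : ℝ => xiF η i j q r (y0 + s • δ) k) (e k) 0 := by
    intro k
    by_cases hki : k = i
    · have h1 : (fun s : ℝ => xiF η i j q r (y0 + s • δ) k) = fun _ => (0:ℝ) := by
        funext s; simp [xiF, hki, hg1 s]
      have h2 : e k = 0 := by simp [hE, hki, Ne.symm hqi, Ne.symm hri]
      rw [h1, h2]; exact hasDerivAt_const 0 0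
    · by_cases hkj : k = j
      · have h1 : (fun s : ℝ => xiF η i j q r (y0 + s • δ) k) = fun _ => (0:ℝ) := by
          funext s; simp [xiF, hki, hkj, hg1 s]
        have h2 : e k = 0 := by simp [hE, hkj, Ne.symm hqj, Ne.symm hrj]
        rw [h1, h2]; exact hasDerivAt_const 0 0
      · have h1 : (fun s : ℝ => xiF η i j q r (y0 + s • δ) k)
            = fun s => η k + (if k = q then (y0 + s • δ).2.1 i else 0)
                + (if k = r then (y0 + s • δ).2.2 j else 0) := by
          funext s; simp [xiF, hki, hkj]
        rw [h1]
        have hq' : HasDerivAt (fun s : ℝ => if k = q then (y0 + s • δ).2.1 i else 0)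
            (if k = q then δa i else 0) 0 := by
          by_cases h : k = q
          · simp only [if_pos h]; exact hd_a i
          · simp only [if_neg h]; exact hasDerivAt_const 0 0
        have hr' : HasDerivAt (fun s : ℝ => if k = r then (y0 + s • δ).2.2 j else 0)
            (if k = r then δb j else 0) 0 := by
          by_cases h : k = r
          · simp only [if_pos h]; exact hd_b j
          · simp only [if_neg h]; exact hasDerivAt_const 0 0
        have := (((hasDerivAt_const (0:ℝ) (η k)).fun_add hq').fun_add hr')
        simpa [hE] using this
  have hd_w : ∀ b, HasDerivAt (fun s : ℝ => wF i j (y0 + s • δ) b) 0 0 := by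
    intro b
    by_cases hbj : b = j
    · have h1 : (fun s : ℝ => wF i j (y0 + s • δ) b) = fun _ => (1:ℝ) := by
        funext s; simp [wF, hbj]
      rw [h1]; exact hasDerivAt_const 0 1
    · by_cases hbi : b = i
      · have h1 : (fun s : ℝ => wF i j (y0 + s • δ) b) = fun _ => (0:ℝ) := by
          funext s; simp [wF, hbi, hbj, Ne.symm hij]
        rw [h1]; exact hasDerivAt_const 0 0
      · have h1 : (fun s : ℝ => wF i j (y0 + s • δ) b) = fun _ => (0:ℝ) := by
          funext s; simp [wF, hbi, hbj, hg1 s]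
        rw [h1]; exact hasDerivAt_const 0 0
  have hd_SW : ∀ m' : Fin n, HasDerivAt
      (fun s : ℝ => SS c (xiF η i j q r (y0 + s • δ)) (wF i j (y0 + s • δ)) m')
      (δa i * c m' q j + δb j * c m' r j) 0 := by
    intro m'
    have h1 : HasDerivAt
        (fun s : ℝ => SS c (xiF η i j q r (y0 + s • δ)) (wF i j (y0 + s • δ)) m')
        (∑ b, ∑ k, ((0:ℝ) * (xiF η i j q r (y0 + (0:ℝ) • δ) k * c m' k b)
          + wF i j (y0 + (0:ℝ) • δ) b * (e k * c m' k b))) 0 := by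
      apply HasDerivAt.fun_sum; intro b _
      apply HasDerivAt.fun_sum; intro k _
      exact (hd_w b).fun_mul ((hd_xi k).mul_const (c m' k b))
    have h2 : (∑ b, ∑ k, ((0:ℝ) * (xiF η i j q r (y0 + (0:ℝ) • δ) k * c m' k b)
          + wF i j (y0 + (0:ℝ) • δ) b * (e k * c m' k b)))
        = δa i * c m' q j + δb j * c m' r j := by
      rw [hγ0]
      simp only [zero_mul, zero_add]
      rw [Finset.sum_eq_single j]
      · have hw1 : wF i j y0 j = 1 := by simp [wF]
        simp only [hw1, one_mul, hE]
        simp only [add_mul, Finset.sum_add_distrib, ite_mul, zero_mul]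
        rw [Finset.sum_ite_eq', Finset.sum_ite_eq']
        simp
      · intro b _ hbj
        have hwb : wF i j y0 b = 0 := by
          by_cases hbi : b = i
          · simp [wF, hbi, hbj, Ne.symm hij]
          · simp [wF, hbi, hbj, hY0]
        simp [hwb]
      · simp
    rw [h2] at h1; exact h1
  by_cases hmj : m = j
  · rw [if_pos hmj]
    have h1 : (fun s : ℝ => PhiW c η i j q r (y0 + s • δ) m)
        = fun s => (1 - (y0 + s • δ).1) * (y0 + s • δ).2.2 i
            + SS c (xiF η i j q r (y0 + s • δ)) (wF i j (y0 + s • δ)) m := by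
      funext s; simp only [PhiW, if_pos hmj]
    rw [h1]
    have h := (((hasDerivAt_const (0:ℝ) (1:ℝ)).fun_sub hd_t).fun_mul (hd_b i)).fun_add (hd_SW m)
    convert h using 1
    · rfl
    · rfl
    rw [hγ0]
    show _ = (0 - 0) * (b0 i) + (1 - y0.1) * δb i + _
    have : y0.1 = 0 := rfl
    rw [this]; ring
  · by_cases hmi : m = i
    · rw [if_neg hmj, if_pos hmi]
      have h1 : (fun s : ℝ => PhiW c η i j q r (y0 + s • δ) m)
          = fun s => SS c (xiF η i j q r (y0 + s • δ)) (wF i j (y0 + s • δ)) m := by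
        funext s; simp only [PhiW, if_neg hmj, if_pos hmi]
      rw [h1]; exact hd_SW m
    · rw [if_neg hmj, if_neg hmi]
      have h1 : (fun s : ℝ => PhiW c η i j q r (y0 + s • δ) m)
          = fun s => (1 - (y0 + s • δ).1)
              * (xiF η i j q r (y0 + s • δ) m * (y0 + s • δ).2.2 m)
              + SS c (xiF η i j q r (y0 + s • δ)) (wF i j (y0 + s • δ)) m := by
        funext s; simp only [PhiW, if_neg hmj, if_neg hmi]
      rw [h1]
      have h := (((hasDerivAt_const (0:ℝ) (1:ℝ)).fun_sub hd_t).fun_mul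
        ((hd_xi m).fun_mul (hd_b m))).fun_add (hd_SW m)
      convert h using 1
      · rfl
      · rfl
      rw [hγ0]
      have hxi0 : xiF η i j q r y0 m = η m := by
        simp [xiF, hmi, hmj, hY0, ha0i, hb0j]
      show _ = (0 - 0) * (xiF η i j q r y0 m * b0 m)
          + (1 - y0.1) * (e m * b0 m + xiF η i j q r y0 m * δb m) + _
      have hy01 : y0.1 = 0 := rfl
      rw [hxi0, hy01, hE]; ring


lemma rank_le_of_two_ker {n : ℕ} (A : Matrix (Fin n) (Fin n) ℝ) (v w : Fin n → ℝ)
    (hv : A.mulVec v = 0) (hw : A.mulVec w = 0) (i j : Fin n)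
    (hvi : v i = 1) (hvj : v j = 0) (hwi : w i = 0) (hwj : w j = 1) :
    A.rank ≤ n - 2 := by
  have hli : LinearIndependent ℝ ![v, w] := by
    rw [LinearIndependent.pair_iff]
    intro s t hst
    constructor
    · have := congrFun hst i
      simpa [hvi, hwi] using this
    · have := congrFun hst j
      simpa [hvj, hwj] using this
  have hspan : Submodule.span ℝ (Set.range ![v, w]) ≤ LinearMap.ker A.mulVecLin := by
    rw [Submodule.span_le]
    rintro x ⟨k, rfl⟩
    fin_cases k <;> simp [LinearMap.mem_ker, Matrix.mulVecLin_apply, hv, hw]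
  have h2 : 2 ≤ Module.finrank ℝ (LinearMap.ker A.mulVecLin) := by
    have := finrank_span_eq_card (R := ℝ) hli
    have hle := Submodule.finrank_mono hspan
    rw [this] at hle
    simpa using hle
  have hrn : A.rank + Module.finrank ℝ (LinearMap.ker A.mulVecLin) = n := by
    have := LinearMap.finrank_range_add_finrank_ker (A.mulVecLin)
    rw [Matrix.rank]
    simpa [Module.finrank_pi] using this
  omega


lemma exists_good_eta {n : ℕ} (F G : Fin n → ℝ) (i j : Fin n)
    (key : ∀ p : Fin n, p ≠ i → p ≠ j → ∃ w : Fin n → ℝ,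
      (w i = 0 ∧ w j = 0 ∧ ∑ k, w k * F k = 0 ∧ ∑ k, w k * G k = 0) ∧ w p ≠ 0) :
    ∃ η : Fin n → ℝ, (η i = 0 ∧ η j = 0 ∧ ∑ k, η k * F k = 0 ∧ ∑ k, η k * G k = 0) ∧
      ∀ p, p ≠ i → p ≠ j → η p ≠ 0 := by
  set Pred : (Fin n → ℝ) → Prop :=
    fun η => η i = 0 ∧ η j = 0 ∧ ∑ k, η k * F k = 0 ∧ ∑ k, η k * G k = 0 with hPred
  suffices H : ∀ s : Finset (Fin n), (∀ p ∈ s, p ≠ i ∧ p ≠ j) →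
      ∃ η, Pred η ∧ ∀ p ∈ s, η p ≠ 0 by
    obtain ⟨η, hη, hne⟩ := H ({p | p ≠ i ∧ p ≠ j} : Finset (Fin n)) (by
      intro p hp; simpa using hp)
    exact ⟨η, hη, fun p hpi hpj => hne p (by simp [hpi, hpj])⟩
  intro s
  induction s using Finset.induction_on with
  | empty =>
    intro _
    exact ⟨0, ⟨by simp, by simp, by simp, by simp⟩, by simp⟩
  | @insert p s hps ih =>
    intro hmem
    obtain ⟨η, hη, hne⟩ := ih (fun b hb => hmem b (Finset.mem_insert_of_mem hb))
    obtain ⟨hpi, hpj⟩ := hmem p (Finset.mem_insert_self p s)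
    obtain ⟨w, hw, hwp⟩ := key p hpi hpj
    obtain ⟨ε, hε⟩ := Infinite.exists_notMem_finset
      ((insert p s).image (fun b => if w b = 0 then 0 else -(η b) / (w b)))
    refine ⟨fun k => η k + ε * w k, ⟨by simp [hη.1, hw.1], by simp [hη.2.1, hw.2.1], ?_, ?_⟩, ?_⟩
    · have : ∑ k, (η k + ε * w k) * F k
        = (∑ k, η k * F k) + ε * ∑ k, w k * F k := by
        rw [Finset.mul_sum, ← Finset.sum_add_distrib]
        apply Finset.sum_congr rfl; intro k _; ring
      rw [this, hη.2.2.1, hw.2.2.1]; ring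
    · have : ∑ k, (η k + ε * w k) * G k
        = (∑ k, η k * G k) + ε * ∑ k, w k * G k := by
        rw [Finset.mul_sum, ← Finset.sum_add_distrib]
        apply Finset.sum_congr rfl; intro k _; ring
      rw [this, hη.2.2.2, hw.2.2.2]; ring
    · intro b hb
      by_cases hwb : w b = 0
      · rcases Finset.mem_insert.1 hb with rfl | hbs
        · exact absurd hwb hwp
        · simp [hwb]; exact hne b hbs
      · intro hcon
        apply hε
        refine Finset.mem_image.2 ⟨b, hb, ?_⟩
        rw [if_neg hwb]
        have hb0 : η b + ε * w b = 0 := hcon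
        field_simp
        linarith [hb0]



theorem stmt0 (n : ℕ) (hn : 5 ≤ n) (c : Fin n → Fin n → Fin n → ℝ)
    (hc : IsParamColl n c) (i j : Fin n) (hij : i ≠ j)
    (hC1 : ∀ k l : Fin n, k ≠ l → k ≠ i → k ≠ j → l ≠ i → l ≠ j →
      c i k j * c j l i ≠ c j k i * c i l j)
    (hC2 : ∀ p : Fin n, p ≠ i → p ≠ j →
      ∃ k l m : Fin n, k < l ∧ l < m ∧
        k ≠ i ∧ k ≠ j ∧ l ≠ i ∧ l ≠ j ∧ m ≠ i ∧ m ≠ j ∧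
        ∀ I : Fin n, (I = i ∨ I = j) →
          c p k I * (c i l j * c j m i - c j l i * c i m j)
            + c p l I * (c j k i * c i m j - c i k j * c j m i)
            + c p m I * (c i k j * c j l i - c j k i * c i l j) ≠ 0) :
    ∃ T > (0 : ℝ), ∀ t : ℝ, 0 < t → t < T →
      ∃ ξ : Fin n → ℝ, ξ ≠ 0 ∧ (pSymb ξ (pScale t c)).rank ≤ n - 2 := by
  classical
  -- the set of "other" indices
  set S : Finset (Fin n) := (Finset.univ : Finset (Fin n)) \ {i, j} with hS
  have hScard : n - 2 ≤ S.card := by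
    have h1 : ({i, j} : Finset (Fin n)).card ≤ 2 := Finset.card_insert_le _ _ |>.trans (by simp)
    have h2 : S.card = n - ({i, j} : Finset (Fin n)).card := by
      rw [hS, Finset.card_sdiff_of_subset (Finset.subset_univ _)]
      simp
    omega
  have hmemS : ∀ p, p ∈ S ↔ p ≠ i ∧ p ≠ j := by
    intro p; simp [hS]
  -- choose q ≠ r in S
  obtain ⟨q, hqS, r, hrS, hqr⟩ := Finset.one_lt_card.mp (by omega : 1 < S.card)
  obtain ⟨hqi, hqj⟩ := (hmemS q).1 hqS
  obtain ⟨hri, hrj⟩ := (hmemS r).1 hrS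
  -- the determinant condition from C1
  have hdet : c i q j * c j r i ≠ c j q i * c i r j := hC1 q r hqr hqi hqj hri hrj
  -- construct η
  obtain ⟨η, ⟨hηi, hηj, hηF, hηG⟩, hηne'⟩ :=
    exists_good_eta (fun k => c j k i) (fun k => c i k j) i j (by
      intro p hpi hpj
      have hpS : p ∈ S := (hmemS p).2 ⟨hpi, hpj⟩
      have hcard2 : 1 < (S.erase p).card := by
        have := Finset.card_erase_of_mem hpS
        omega
      obtain ⟨q', hq'T, r', hr'T, hq'r'⟩ := Finset.one_lt_card.mp hcard2
      have hq'p : q' ≠ p := Finset.ne_of_mem_erase hq'T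
      have hr'p : r' ≠ p := Finset.ne_of_mem_erase hr'T
      obtain ⟨hq'i, hq'j⟩ := (hmemS q').1 (Finset.mem_of_mem_erase hq'T)
      obtain ⟨hr'i, hr'j⟩ := (hmemS r').1 (Finset.mem_of_mem_erase hr'T)
      refine ⟨fun k => (if k = q' then c j r' i * c i p j - c j p i * c i r' j else 0)
        + (if k = r' then c j p i * c i q' j - c j q' i * c i p j else 0)
        + (if k = p then c j q' i * c i r' j - c j r' i * c i q' j else 0), ⟨?_, ?_, ?_, ?_⟩, ?_⟩
      · simp [Ne.symm hq'i, Ne.symm hr'i, Ne.symm hpi]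
      · simp [Ne.symm hq'j, Ne.symm hr'j, Ne.symm hpj]
      · simp only [add_mul, Finset.sum_add_distrib, ite_mul, zero_mul]
        rw [Finset.sum_ite_eq', Finset.sum_ite_eq', Finset.sum_ite_eq']
        simp only [Finset.mem_univ, if_true]
        ring
      · simp only [add_mul, Finset.sum_add_distrib, ite_mul, zero_mul]
        rw [Finset.sum_ite_eq', Finset.sum_ite_eq', Finset.sum_ite_eq']
        simp only [Finset.mem_univ, if_true]
        ring
      · have hkey := hC1 r' q' (Ne.symm hq'r') hr'i hr'j hq'i hq'j
        intro hcon
        simp only [if_neg (Ne.symm hq'p), if_neg (Ne.symm hr'p), if_pos rfl, if_true,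
          zero_add] at hcon
        exact hkey (by linear_combination hcon))
  have hηne : ∀ p, p ≠ i → p ≠ j → η p ≠ 0 := hηne'
  -- base point
  set a0 : Fin n → ℝ := fun m => if m = i then 0
    else if m = j then -∑ k, η k * c i k i else -(∑ k, η k * c m k i) / η m with ha0
  set b0 : Fin n → ℝ := fun m => if m = j then 0
    else if m = i then -∑ k, η k * c j k j else -(∑ k, η k * c m k j) / η m with hb0
  set y0 : Yy n := ((0:ℝ), a0, b0) with hy0
  have ha0i : a0 i = 0 := by simp [ha0]
  have hb0j : b0 j = 0 := by simp [hb0]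
  -- ξ at the base point is η
  have hxi0 : xiF η i j q r y0 = η := by
    funext k
    by_cases hki : k = i
    · simp [xiF, hki, hy0, hηi]
    · by_cases hkj : k = j
      · simp [xiF, hki, hkj, hy0, hηj]
      · simp only [xiF, if_neg hki, if_neg hkj]
        have h1 : (if k = q then (y0.2.1) i else 0) = 0 := by
          by_cases h : k = q <;> simp [h, hy0, ha0i]
        have h2 : (if k = r then (y0.2.2) j else 0) = 0 := by
          by_cases h : k = r <;> simp [h, hy0, hb0j]
        rw [h1, h2]; ring
  -- v, w at base point
  have hv0 : ∀ b, vF i j y0 b = (if b = i then 1 else 0) := by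
    intro b
    by_cases hbi : b = i
    · simp [vF, hbi]
    · by_cases hbj : b = j <;> simp [vF, hbi, hbj, hy0]
  have hw0 : ∀ b, wF i j y0 b = (if b = j then 1 else 0) := by
    intro b
    by_cases hbj : b = j
    · simp [wF, hbj]
    · by_cases hbi : b = i <;> simp [wF, hbi, hbj, hy0, hij]
  have hSv0 : ∀ m, SS c (xiF η i j q r y0) (vF i j y0) m = ∑ k, η k * c m k i := by
    intro m
    rw [hxi0]
    show (∑ b, ∑ k, vF i j y0 b * (η k * c m k b)) = _
    rw [Finset.sum_eq_single i]
    · simp [hv0 i]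
    · intro b _ hbi; simp [hv0 b, hbi]
    · simp
  have hSw0 : ∀ m, SS c (xiF η i j q r y0) (wF i j y0) m = ∑ k, η k * c m k j := by
    intro m
    rw [hxi0]
    show (∑ b, ∑ k, wF i j y0 b * (η k * c m k b)) = _
    rw [Finset.sum_eq_single j]
    · simp [hw0 j]
    · intro b _ hbj; simp [hw0 b, hbj]
    · simp
  -- Psi vanishes at the base point
  have hPsi0 : Psi c η i j q r y0 = ((0:ℝ), 0, 0) := by
    refine Prod.ext rfl (Prod.ext ?_ ?_)
    · show PhiV c η i j q r y0 = 0
      funext m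
      by_cases hmi : m = i
      · show (if m = i then _ else _) = (0:ℝ)
        rw [if_pos hmi, hSv0 m]
        have : y0.2.1 j = -∑ k, η k * c i k i := by simp [hy0, ha0, Ne.symm hij]
        rw [this]
        subst hmi; simp [hy0]
      · by_cases hmj : m = j
        · show (if m = i then _ else _) = (0:ℝ)
          rw [if_neg hmi, if_pos hmj, hSv0 m]
          subst hmj; exact hηF
        · show (if m = i then _ else _) = (0:ℝ)
          rw [if_neg hmi, if_neg hmj, hSv0 m]
          have h1 : xiF η i j q r y0 m = η m := by rw [hxi0]
          have h2 : y0.2.1 m = -(∑ k, η k * c m k i) / η m := by simp [hy0, ha0, hmi, hmj]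
          rw [h1, h2]
          have h3 : y0.1 = 0 := rfl
          rw [h3]
          field_simp [hηne m hmi hmj]
          ring
    · show PhiW c η i j q r y0 = 0
      funext m
      by_cases hmj : m = j
      · show (if m = j then _ else _) = (0:ℝ)
        rw [if_pos hmj, hSw0 m]
        have : y0.2.2 i = -∑ k, η k * c j k j := by simp [hy0, hb0, hij]
        rw [this]
        subst hmj; simp [hy0]
      · by_cases hmi : m = i
        · show (if m = j then _ else _) = (0:ℝ)
          rw [if_neg hmj, if_pos hmi, hSw0 m]
          subst hmi; exact hηG
        · show (if m = j then _ else _) = (0:ℝ)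
          rw [if_neg hmj, if_neg hmi, hSw0 m]
          have h1 : xiF η i j q r y0 m = η m := by rw [hxi0]
          have h2 : y0.2.2 m = -(∑ k, η k * c m k j) / η m := by simp [hy0, hb0, hmi, hmj]
          rw [h1, h2]
          have h3 : y0.1 = 0 := rfl
          rw [h3]
          field_simp [hηne m hmi hmj]
          ring
  -- strict derivative at the base point
  have hcd := contDiff_Psi c η i j q r
  have hstrict : HasStrictFDerivAt (Psi c η i j q r)
      (fderiv ℝ (Psi c η i j q r) y0) y0 :=
    (hcd.contDiffAt).hasStrictFDerivAt one_ne_zero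
  set M := fderiv ℝ (Psi c η i j q r) y0 with hMdef
  have hdir : ∀ z : Yy n, HasDerivAt (fun s : ℝ => Psi c η i j q r (y0 + s • z)) (M z) 0 := by
    intro z
    have hline : HasDerivAt (fun s : ℝ => y0 + s • z) z 0 := by
      have h1 : HasDerivAt (fun s : ℝ => s • z) ((1:ℝ) • z) 0 := (hasDerivAt_id 0).smul_const z
      simpa using h1.const_add y0
    have hpt : y0 + (0:ℝ) • z = y0 := by simp
    have hf : HasFDerivAt (Psi c η i j q r) M (y0 + (0:ℝ) • z) := by
      rw [hpt]; exact hstrict.hasFDerivAt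
    exact hf.comp_hasDerivAt 0 hline
  have hMfst : ∀ z : Yy n, (M z).1 = z.1 := by
    intro z
    have h1 := (ContinuousLinearMap.fst ℝ ℝ
      ((Fin n → ℝ) × (Fin n → ℝ))).hasFDerivAt.comp_hasDerivAt 0 (hdir z)
    have h2 : HasDerivAt (fun s : ℝ => (ContinuousLinearMap.fst ℝ ℝ
        ((Fin n → ℝ) × (Fin n → ℝ))) ∘ (fun s : ℝ => Psi c η i j q r (y0 + s • z)) <| s)
        z.1 0 := by
      have heq : ((fun y : Yy n => y.1) ∘ (fun s : ℝ => Psi c η i j q r (y0 + s • z)))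
          = fun s : ℝ => 0 + s * z.1 := rfl
      show HasDerivAt ((fun y : Yy n => y.1) ∘ (fun s : ℝ => Psi c η i j q r (y0 + s • z))) z.1 0
      rw [heq]
      simpa using (hasDerivAt_mul_const z.1).const_add 0
    exact (h1.unique h2).symm ▸ rfl
  have hker : ∀ z : Yy n, M z = 0 → z = 0 := by
    intro z hz
    have hz1 : z.1 = 0 := by
      have := hMfst z
      rw [hz] at this
      exact this.symm
    have hzeq : ((0:ℝ), z.2.1, z.2.2) = z := by rw [← hz1]
    have hDV : ∀ m : Fin n,
        (if m = i then z.2.1 j + (z.2.1 i * c m q i + z.2.2 j * c m r i)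
         else if m = j then z.2.1 i * c m q i + z.2.2 j * c m r i
         else ((if m = q then z.2.1 i else 0) + (if m = r then z.2.2 j else 0)) * a0 m
              + η m * z.2.1 m + (z.2.1 i * c m q i + z.2.2 j * c m r i)) = 0 := by
      intro m
      have hppV := hasDerivAt_PhiV c η a0 b0 z.2.1 z.2.2 i j q r (Ne.symm hij)
        hqi hri hqj hrj ha0i hb0j m
      rw [hzeq, ← hy0] at hppV
      have hproj : HasDerivAt (fun s : ℝ => PhiV c η i j q r (y0 + s • z) m)
          ((M z).2.1 m) 0 := by
        exact ((ContinuousLinearMap.proj m).comp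
          ((ContinuousLinearMap.fst ℝ (Fin n → ℝ) (Fin n → ℝ)).comp
            (ContinuousLinearMap.snd ℝ ℝ
              ((Fin n → ℝ) × (Fin n → ℝ))))).hasFDerivAt.comp_hasDerivAt 0 (hdir z)
      have := hppV.unique hproj
      rw [this, hz]
      rfl
    have hDW : ∀ m : Fin n,
        (if m = j then z.2.2 i + (z.2.1 i * c m q j + z.2.2 j * c m r j)
         else if m = i then z.2.1 i * c m q j + z.2.2 j * c m r j
         else ((if m = q then z.2.1 i else 0) + (if m = r then z.2.2 j else 0)) * b0 m
              + η m * z.2.2 m + (z.2.1 i * c m q j + z.2.2 j * c m r j)) = 0 := by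
      intro m
      have hppW := hasDerivAt_PhiW c η a0 b0 z.2.1 z.2.2 i j q r (Ne.symm hij)
        hqi hri hqj hrj ha0i hb0j m
      rw [hzeq, ← hy0] at hppW
      have hproj : HasDerivAt (fun s : ℝ => PhiW c η i j q r (y0 + s • z) m)
          ((M z).2.2 m) 0 := by
        exact ((ContinuousLinearMap.proj m).comp
          ((ContinuousLinearMap.snd ℝ (Fin n → ℝ) (Fin n → ℝ)).comp
            (ContinuousLinearMap.snd ℝ ℝ
              ((Fin n → ℝ) × (Fin n → ℝ))))).hasFDerivAt.comp_hasDerivAt 0 (hdir z)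
      have := hppW.unique hproj
      rw [this, hz]
      rfl
    have h1 := hDV j
    rw [if_neg (Ne.symm hij), if_pos rfl] at h1
    have h2 := hDW i
    rw [if_neg hij, if_pos rfl] at h2
    have hdai : z.2.1 i = 0 := by
      have hfac : c j q i * c i r j - c i q j * c j r i ≠ 0 := sub_ne_zero.mpr (by
        intro h; exact hdet (by linear_combination -h))
      have hmul : z.2.1 i * (c j q i * c i r j - c i q j * c j r i) = 0 := by
        linear_combination c i r j * h1 - c j r i * h2
      rcases mul_eq_zero.mp hmul with h | h
      · exact h
      · exact absurd h hfac
    have hdbj : z.2.2 j = 0 := by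
      have hfac : c j r i * c i q j - c i r j * c j q i ≠ 0 := sub_ne_zero.mpr (by
        intro h; exact hdet (by linear_combination h))
      have hmul : z.2.2 j * (c j r i * c i q j - c i r j * c j q i) = 0 := by
        linear_combination c i q j * h1 - c j q i * h2
      rcases mul_eq_zero.mp hmul with h | h
      · exact h
      · exact absurd h hfac
    have hdaj : z.2.1 j = 0 := by
      have h3 := hDV i
      rw [if_pos rfl] at h3
      rw [hdai, hdbj] at h3
      linarith
    have hdbi : z.2.2 i = 0 := by
      have h3 := hDW j
      rw [if_pos rfl] at h3
      rw [hdai, hdbj] at h3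
      linarith
    have hdap : ∀ p, p ≠ i → p ≠ j → z.2.1 p = 0 := by
      intro p hpi hpj
      have h3 := hDV p
      rw [if_neg hpi, if_neg hpj] at h3
      rw [hdai, hdbj] at h3
      have h4 : η p * z.2.1 p = 0 := by
        have h5 : ((if p = q then (0:ℝ) else 0) + if p = r then (0:ℝ) else 0) = 0 := by
          simp
        rw [h5] at h3
        linarith
      rcases mul_eq_zero.mp h4 with h | h
      · exact absurd h (hηne p hpi hpj)
      · exact h
    have hdbp : ∀ p, p ≠ i → p ≠ j → z.2.2 p = 0 := by
      intro p hpi hpj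
      have h3 := hDW p
      rw [if_neg hpj, if_neg hpi] at h3
      rw [hdai, hdbj] at h3
      have h4 : η p * z.2.2 p = 0 := by
        have h5 : ((if p = q then (0:ℝ) else 0) + if p = r then (0:ℝ) else 0) = 0 := by
          simp
        rw [h5] at h3
        linarith
      rcases mul_eq_zero.mp h4 with h | h
      · exact absurd h (hηne p hpi hpj)
      · exact h
    have hza : z.2.1 = 0 := by
      funext k
      by_cases hki : k = i
      · rw [hki]; exact hdai
      by_cases hkj : k = j
      · rw [hkj]; exact hdaj
      exact hdap k hki hkj
    have hzb : z.2.2 = 0 := by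
      funext k
      by_cases hki : k = i
      · rw [hki]; exact hdbi
      by_cases hkj : k = j
      · rw [hkj]; exact hdbj
      exact hdbp k hki hkj
    rw [← hzeq, hza, hzb]
    rfl
  have hinj : Function.Injective M := by
    intro x y hxy
    have h0 : M (x - y) = 0 := by rw [map_sub, hxy, sub_self]
    have := hker _ h0
    exact sub_eq_zero.mp this
  have hsurj : Function.Surjective M :=
    (LinearMap.injective_iff_surjective (f := (M : Yy n →ₗ[ℝ] Yy n))).mp hinj
  let Meq : Yy n ≃L[ℝ] Yy n :=
    (LinearEquiv.ofBijective (M : Yy n →ₗ[ℝ] Yy n) ⟨hinj, hsurj⟩).toContinuousLinearEquiv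
  have hMeq : (Meq : Yy n →L[ℝ] Yy n) = M := by
    refine ContinuousLinearMap.ext fun z => ?_
    rfl
  have hstrict' : HasStrictFDerivAt (Psi c η i j q r) (Meq : Yy n →L[ℝ] Yy n) y0 := by
    rw [hMeq]; exact hstrict
  set G := hstrict'.localInverse (Psi c η i j q r) Meq y0 with hGdef
  have hev1 : ∀ᶠ y in nhds (Psi c η i j q r y0), Psi c η i j q r (G y) = y :=
    hstrict'.eventually_right_inverse
  have hcont : ContinuousAt G (Psi c η i j q r y0) := hstrict'.localInverse_continuousAt
  have hG0 : G (Psi c η i j q r y0) = y0 := hstrict'.localInverse_apply_image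
  have hcont2 : ContinuousAt (fun y => (G y).2.1 i) (Psi c η i j q r y0) :=
    ((continuous_apply i).comp (continuous_fst.comp continuous_snd)).continuousAt.comp hcont
  have hlt : ∀ᶠ y in nhds (Psi c η i j q r y0), |(G y).2.1 i| < |η q| := by
    have h0 : (0:ℝ) < |η q| := abs_pos.mpr (hηne q hqi hqj)
    have htend : Filter.Tendsto (fun y => (G y).2.1 i)
        (nhds (Psi c η i j q r y0)) (nhds 0) := by
      have h1 := hcont2
      rw [ContinuousAt] at h1
      have h2 : (G (Psi c η i j q r y0)).2.1 i = 0 := by rw [hG0]; exact ha0i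
      rwa [h2] at h1
    have habs := htend.abs
    rw [abs_zero] at habs
    exact habs.eventually_lt_const h0
  have hall := hev1.and hlt
  rw [hPsi0, Metric.eventually_nhds_iff] at hall
  obtain ⟨ε, hε, hball⟩ := hall
  refine ⟨ε, hε, ?_⟩
  intro t ht htT
  have hdist : dist ((t, ((0:Fin n → ℝ), (0:Fin n → ℝ))) : Yy n)
      (((0:ℝ), 0, 0) : Yy n) < ε := by
    rw [Prod.dist_eq]
    simp only [Prod.dist_eq, dist_self, Real.dist_eq, sub_zero]
    rw [abs_of_pos ht]
    simp [htT, max_def]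
    split <;> [skip; exact htT] <;> linarith
  have hy := hball hdist
  obtain ⟨hPsiGy, hltGy⟩ := hy
  set u := G ((t, ((0:Fin n → ℝ), (0:Fin n → ℝ))) : Yy n) with hu
  have hu1 : u.1 = t := congrArg Prod.fst hPsiGy
  have hPV : PhiV c η i j q r u = 0 := congrArg (fun y : Yy n => y.2.1) hPsiGy
  have hPW : PhiW c η i j q r u = 0 := congrArg (fun y : Yy n => y.2.2) hPsiGy
  refine ⟨xiF η i j q r u, ?_, ?_⟩
  · intro h0
    have hq0 := congrFun h0 q
    have hxq : xiF η i j q r u q = η q + u.2.1 i := by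
      simp [xiF, hqi, hqj, hqr]
    rw [hxq] at hq0
    have hval : u.2.1 i = -η q := by
      have : η q + u.2.1 i = 0 := hq0
      linarith
    rw [hval, abs_neg] at hltGy
    exact lt_irrefl _ hltGy
  · have hvmul := mulVec_v hc hij η q r u
    have hwmul := mulVec_w hc hij η q r u
    rw [hu1, hPV, smul_zero] at hvmul
    rw [hu1, hPW, smul_zero] at hwmul
    exact rank_le_of_two_ker _ _ _ hvmul hwmul i j
      (by simp [vF]) (by simp [vF, Ne.symm hij]) (by simp [wF, hij]) (by simp [wF])
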